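/- If a prime P5-free graph G has an efficient dominating set with at least three vertices, then G is a thin spider (in particular, G is 2P2-free). -/

import Mathlib

open SimpleGraph

/-- `D` is an efficient dominating set: every vertex is dominated by exactly one vertex of `D`
(a vertex dominates itself and its neighbors). -/
def SimpleGraph.IsEDS {V : Type*} (G : SimpleGraph V) (D : Set V) : Prop :=
  ∀ v : V, ∃! d, d ∈ D ∧ (d = v ∨ G.Adj d v)

/-- The closed neighborhood of a vertex. -/
def SimpleGraph.closedNbhd {V : Type*} (G : SimpleGraph V) (v : V) : Set V :=
  insert v (G.neighborSet v)

/-- A homogeneous set: at least two vertices, not all of them, and every outside vertex is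
adjacent to all or to none of them. -/
def SimpleGraph.IsHomogeneousSet {V : Type*} (G : SimpleGraph V) (H : Set V) : Prop :=
  2 ≤ H.ncard ∧ H ≠ Set.univ ∧
    ∀ v ∉ H, (∀ h ∈ H, G.Adj v h) ∨ (∀ h ∈ H, ¬ G.Adj v h)

/-- A prime graph: at least two vertices and no homogeneous set. -/
def SimpleGraph.IsPrime {V : Type*} [Fintype V] (G : SimpleGraph V) : Prop :=
  2 ≤ Fintype.card V ∧ ∀ H : Set V, ¬ G.IsHomogeneousSet H

/-- `G` is `P₅`-free: no induced subgraph isomorphic to the path on five vertices. -/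
def SimpleGraph.P5Free {V : Type*} (G : SimpleGraph V) : Prop :=
  ¬ Nonempty (SimpleGraph.pathGraph 5 ↪g G)

/-- The graph `2P₂`: the disjoint union of two edges. -/
def twoP2 : SimpleGraph (Fin 4) :=
  SimpleGraph.fromRel (fun a b => (a = 0 ∧ b = 1) ∨ (a = 2 ∧ b = 3))

/-- `G` is `2P₂`-free: no induced subgraph isomorphic to `2P₂`. -/
def SimpleGraph.TwoP2Free {V : Type*} (G : SimpleGraph V) : Prop :=
  ¬ Nonempty (twoP2 ↪g G)

/-- A thin spider: a split graph with a clique side `C` and independent side `I`,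
with a perfect matching between `C` and `I`. -/
def SimpleGraph.IsThinSpider {V : Type*} (G : SimpleGraph V) : Prop :=
  ∃ C I : Set V, Disjoint C I ∧ C ∪ I = Set.univ ∧ G.IsClique C ∧
    (∀ a ∈ I, ∀ b ∈ I, a ≠ b → ¬ G.Adj a b) ∧
    (∀ c ∈ C, ∃! i, i ∈ I ∧ G.Adj c i) ∧
    (∀ i ∈ I, ∃! c, c ∈ C ∧ G.Adj i c)


lemma twoP2_adj : ∀ i j : Fin 4, twoP2.Adj i j ↔
    ((i = 0 ∧ j = 1) ∨ (i = 1 ∧ j = 0) ∨ (i = 2 ∧ j = 3) ∨ (i = 3 ∧ j = 2)) := by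
  intro i j
  rw [twoP2, SimpleGraph.fromRel_adj]
  constructor
  · rintro ⟨hne, h⟩
    tauto
  · intro h
    rcases h with ⟨h1,h2⟩|⟨h1,h2⟩|⟨h1,h2⟩|⟨h1,h2⟩ <;> subst h1 <;> subst h2 <;>
      exact ⟨by decide, by tauto⟩

lemma thinSpider_twoP2Free {V : Type*} {G : SimpleGraph V} (h : G.IsThinSpider) :
    G.TwoP2Free := by
  obtain ⟨C, I, hdisj, hunion, hclique, hindep, _, _⟩ := h
  rintro ⟨e⟩
  have hmem : ∀ v : V, v ∉ I → v ∈ C := by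
    intro v hv
    have : v ∈ C ∪ I := hunion ▸ Set.mem_univ v
    rcases this with h | h
    · exact h
    · exact absurd h hv
  have h01 : G.Adj (e 0) (e 1) := e.map_rel_iff.mpr ((twoP2_adj 0 1).mpr (by tauto))
  have h23 : G.Adj (e 2) (e 3) := e.map_rel_iff.mpr ((twoP2_adj 2 3).mpr (by tauto))
  have hno : ∀ i j : Fin 4, (i = 0 ∨ i = 1) → (j = 2 ∨ j = 3) → ¬ G.Adj (e i) (e j) := by
    rintro i j (rfl|rfl) (rfl|rfl) hadj <;>
    · have := (twoP2_adj _ _).mp (e.map_rel_iff.mp hadj)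
      simp at this
  have hcl : ∀ i j : Fin 4, (i = 0 ∨ i = 1) → (j = 2 ∨ j = 3) → e i ∈ C → e j ∈ C → False := by
    intro i j hi hj hiC hjC
    have hne : e i ≠ e j := by
      intro hh
      have : i = j := e.injective hh
      rcases hi with rfl|rfl <;> rcases hj with rfl|rfl <;> simp_all
    exact hno i j hi hj (hclique hiC hjC hne)
  have hmemI : ∀ v : V, v ∉ C → v ∈ I := by
    intro v hv
    have : v ∈ C ∪ I := hunion ▸ Set.mem_univ v
    rcases this with h | h
    · exact absurd h hv
    · exact h
  have hC1 : e 0 ∈ C ∨ e 1 ∈ C := by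
    by_contra hh
    push_neg at hh
    exact hindep _ (hmemI _ hh.1) _ (hmemI _ hh.2) h01.ne h01
  have hC2 : e 2 ∈ C ∨ e 3 ∈ C := by
    by_contra hh
    push_neg at hh
    exact hindep _ (hmemI _ hh.1) _ (hmemI _ hh.2) h23.ne h23
  rcases hC1 with h1 | h1 <;> rcases hC2 with h2 | h2
  · exact hcl 0 2 (Or.inl rfl) (Or.inl rfl) h1 h2
  · exact hcl 0 3 (Or.inl rfl) (Or.inr rfl) h1 h2
  · exact hcl 1 2 (Or.inr rfl) (Or.inl rfl) h1 h2
  · exact hcl 1 3 (Or.inr rfl) (Or.inr rfl) h1 h2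

lemma inj5 {V : Type*} {a b c d e : V}
    (nab : a ≠ b) (nac : a ≠ c) (nad : a ≠ d) (nae : a ≠ e)
    (nbc : b ≠ c) (nbd : b ≠ d) (nbe : b ≠ e)
    (ncd : c ≠ d) (nce : c ≠ e) (nde : d ≠ e) :
    Function.Injective ![a,b,c,d,e] := by
  intro i j hij
  fin_cases i <;> fin_cases j <;> simp_all

lemma no_P5_aux {V : Type*} {G : SimpleGraph V}
    (hP5 : G.P5Free)
    {a b c d e : V}
    (hab : G.Adj a b) (hbc : G.Adj b c) (hcd : G.Adj c d) (hde : G.Adj d e)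
    (hac : ¬ G.Adj a c) (had : ¬ G.Adj a d) (hae : ¬ G.Adj a e)
    (hbd : ¬ G.Adj b d) (hbe : ¬ G.Adj b e) (hce : ¬ G.Adj c e) : False := by
  have hba := hab.symm; have hcb := hbc.symm; have hdc := hcd.symm; have hed := hde.symm
  have hca : ¬ G.Adj c a := fun h => hac h.symm
  have hda : ¬ G.Adj d a := fun h => had h.symm
  have hea : ¬ G.Adj e a := fun h => hae h.symm
  have hdb : ¬ G.Adj d b := fun h => hbd h.symm
  have heb : ¬ G.Adj e b := fun h => hbe h.symm
  have hec : ¬ G.Adj e c := fun h => hce h.symm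
  have nac : a ≠ c := by rintro rfl; exact had hcd
  have nad : a ≠ d := by rintro rfl; exact hbd hab.symm
  have nae : a ≠ e := by rintro rfl; exact had hed
  have nbd : b ≠ d := by rintro rfl; exact had hab
  have nbe : b ≠ e := by rintro rfl; exact hbd hed
  have nce : c ≠ e := by rintro rfl; exact hbe hbc
  apply hP5
  refine ⟨⟨⟨![a,b,c,d,e], inj5 hab.ne nac nad nae hbc.ne nbd nbe hcd.ne nce hde.ne⟩, ?_⟩⟩
  intro i j
  fin_cases i <;> fin_cases j <;>
    simp [pathGraph_adj, hab, hbc, hcd, hde, hba, hcb, hdc, hed,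
      hac, had, hae, hbd, hbe, hce, hca, hda, hea, hdb, heb, hec, G.irrefl] <;>
    decide

theorem stmt_18' {V : Type*} [Fintype V] (G : SimpleGraph V) (hprime : G.IsPrime)
    (hP5 : G.P5Free) (D : Set V) (hD : G.IsEDS D) (hcard : 3 ≤ D.ncard) :
    G.IsThinSpider := by
  classical
  obtain ⟨hV2, hnohom⟩ := hprime
  choose f hf using hD
  have hfD : ∀ v, f v ∈ D := fun v => (hf v).1.1
  have hfu : ∀ v y, y ∈ D → (y = v ∨ G.Adj y v) → y = f v := fun v y hy h => (hf v).2 y ⟨hy, h⟩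
  have hfmem : ∀ v ∈ D, f v = v := fun v hv => (hfu v v hv (Or.inl rfl)).symm
  have hDD : ∀ d ∈ D, ∀ e ∈ D, ¬ G.Adj d e := by
    intro d hd e he hadj
    have h1 : d = f e := hfu e d hd (Or.inr hadj)
    have h2 : f e = e := hfmem e he
    exact G.loopless.irrefl e (by rwa [h1.trans h2] at hadj)
  have hadjf : ∀ v d, d ∈ D → G.Adj d v → d = f v := fun v d hd h => hfu v d hd (Or.inr h)
  have hfadj : ∀ v, v ∉ D → G.Adj (f v) v := by
    intro v hv
    rcases (hf v).1.2 with h | h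
    · exact absurd (h ▸ hfD v) hv
    · exact h
  have hnadj : ∀ v, v ∉ D → ∀ e, e ∈ D → e ≠ f v → ¬ G.Adj e v :=
    fun v hv e he hne h => hne (hadjf v e he h)
  -- at least 3 vertices
  have cardV3 : 3 ≤ Fintype.card V := by
    calc 3 ≤ D.ncard := hcard
    _ ≤ (Set.univ : Set V).ncard := Set.ncard_le_ncard (Set.subset_univ D) Set.finite_univ
    _ = Fintype.card V := by rw [Set.ncard_univ, Nat.card_eq_fintype_card]
  -- third element of D
  have hthird : ∀ a b : V, ∃ c, c ∈ D ∧ c ≠ a ∧ c ≠ b := by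
    intro a b
    by_contra h
    push_neg at h
    have hsub : D ⊆ {a, b} := by
      intro x hx
      by_cases hxa : x = a
      · exact Or.inl hxa
      · exact Or.inr (h x hx hxa)
    have h2 : D.ncard ≤ 2 := by
      refine le_trans (Set.ncard_le_ncard hsub (Set.toFinite _)) ?_
      refine le_trans (Set.ncard_insert_le a {b}) ?_
      simp
    omega
  -- connectivity
  have hconn : ∀ u v : V, G.Reachable u v := by
    by_contra h
    push_neg at h
    obtain ⟨u, v, huv⟩ := h
    by_cases h2 : 2 ≤ ({x | G.Reachable u x} : Set V).ncard
    · apply hnohom {x | G.Reachable u x}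
      refine ⟨h2, ?_, ?_⟩
      · intro he
        exact huv ((Set.ext_iff.mp he v).mpr trivial)
      · intro w hw
        right
        intro x hx hadj
        exact hw (hx.trans hadj.symm.reachable)
    · have hiso : ∀ y, ¬ G.Adj u y := by
        intro y hy
        have hsub : ({u, y} : Set V) ⊆ {x | G.Reachable u x} := by
          rintro z (rfl | rfl)
          · exact Reachable.refl _
          · exact hy.reachable
        have := Set.ncard_le_ncard hsub (Set.toFinite _)
        rw [Set.ncard_pair hy.ne] at this
        omega
      obtain ⟨d1, hd1, hne1, -⟩ := hthird u u
      obtain ⟨d2, hd2, hne2a, hne2b⟩ := hthird u d1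
      apply hnohom {u}ᶜ
      refine ⟨?_, ?_, ?_⟩
      · have hsub : ({d1, d2} : Set V) ⊆ {u}ᶜ := by
          rintro z (rfl | rfl)
          · simpa using hne1
          · simpa using hne2a
        have := Set.ncard_le_ncard hsub (Set.toFinite _)
        rwa [Set.ncard_pair (fun hh => hne2b hh.symm)] at this
      · intro he
        have : u ∈ ({u}ᶜ : Set V) := he ▸ Set.mem_univ u
        exact this rfl
      · intro w hw
        have hwu : w = u := by simpa using hw
        subst hwu
        exact Or.inr fun x _ => hiso x
  -- cross-class P3 is forbidden
  have hT : ∀ x y z, x ∉ D → y ∉ D → z ∉ D → f x ≠ f y → f y ≠ f z → f x ≠ f z →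
      G.Adj x y → G.Adj y z → G.Adj x z := by
    intro x y z hx hy hz hxy hyz hxz h1 h2
    by_contra hn
    exact no_P5_aux hP5 (hfadj x hx) h1 h2 (hfadj z hz).symm
      (hnadj y hy (f x) (hfD x) hxy)
      (hnadj z hz (f x) (hfD x) hxz)
      (hDD (f x) (hfD x) (f z) (hfD z))
      hn
      (fun h => hxz (hadjf x (f z) (hfD z) h.symm).symm)
      (fun h => hyz (hadjf y (f z) (hfD z) h.symm).symm)
  -- step-1 P5 lemma
  have hstep1 : ∀ a b w, a ∉ D → b ∉ D → w ∉ D → f a = f b → f w ≠ f a →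
      ¬ G.Adj a b → G.Adj w a → G.Adj w b := by
    intro a b w ha hb hw hab hfw hnab hwa
    by_contra hnwb
    -- P5 : (f w, w, a, f a, b)
    exact no_P5_aux hP5 (hfadj w hw) hwa (hfadj a ha).symm (hab ▸ hfadj b hb)
      (hnadj a ha (f w) (hfD w) hfw)
      (hDD (f w) (hfD w) (f a) (hfD a))
      (hnadj b hb (f w) (hfD w) (hab ▸ hfw))
      (fun h => hfw (hadjf w (f a) (hfD a) h.symm).symm)
      hnwb
      hnab
  -- each class C_d is a clique
  have hclique : ∀ x y, x ∉ D → y ∉ D → f x = f y → x ≠ y → G.Adj x y := by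
    intro x y hx hy hfxy hne
    by_contra hnxy
    set R : V → V → Prop :=
      fun p q => p ∉ D ∧ q ∉ D ∧ f p = f x ∧ f q = f x ∧ p ≠ q ∧ ¬ G.Adj p q with hR
    have hmemH : ∀ z, Relation.ReflTransGen R x z → z ∉ D ∧ f z = f x := by
      intro z hz
      induction hz with
      | refl => exact ⟨hx, rfl⟩
      | tail hab hbc ih => exact ⟨hbc.2.1, hbc.2.2.2.1⟩
    have hyH : Relation.ReflTransGen R x y :=
      Relation.ReflTransGen.single ⟨hx, hy, rfl, hfxy.symm, hne, hnxy⟩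
    apply hnohom {z | Relation.ReflTransGen R x z}
    refine ⟨?_, ?_, ?_⟩
    · have hsub : ({x, y} : Set V) ⊆ {z | Relation.ReflTransGen R x z} := by
        rintro z (rfl | rfl)
        · exact Relation.ReflTransGen.refl
        · exact hyH
      have := Set.ncard_le_ncard hsub (Set.toFinite _)
      rwa [Set.ncard_pair hne] at this
    · intro he
      have : f x ∈ {z | Relation.ReflTransGen R x z} := (Set.ext_iff.mp he (f x)).mpr trivial
      exact (hmemH (f x) this).1 (hfD x)
    · intro v hv
      by_cases hvD : v ∈ D
      · by_cases hvd : v = f x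
        · left
          intro h hh
          have := hmemH h hh
          rw [hvd, ← this.2]
          exact hfadj h this.1
        · right
          intro h hh hadj
          have := hmemH h hh
          exact hnadj h this.1 v hvD (fun hh2 => hvd (hh2.trans this.2)) hadj
      · by_cases hfvd : f v = f x
        · left
          intro h hh
          by_contra hadj
          exact hv (Relation.ReflTransGen.tail hh
            ⟨(hmemH h hh).1, hvD, (hmemH h hh).2, hfvd, fun hh2 => hv (hh2 ▸ hh),
              fun hadj2 => hadj hadj2.symm⟩)
        · have htrans : ∀ h, Relation.ReflTransGen R x h → (G.Adj v h ↔ G.Adj v x) := by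
            intro h hh
            induction hh with
            | refl => exact Iff.rfl
            | tail hab hbc ih =>
              refine Iff.trans ?_ ih
              constructor
              · intro hvc
                exact hstep1 _ _ v hbc.2.1 hbc.1 hvD (hbc.2.2.2.1.trans hbc.2.2.1.symm)
                  (fun hh2 => hfvd (hh2.trans hbc.2.2.2.1))
                  (fun hadj => hbc.2.2.2.2.2 hadj.symm) hvc
              · intro hvb
                exact hstep1 _ _ v hbc.1 hbc.2.1 hvD (hbc.2.2.1.trans hbc.2.2.2.1.symm)
                  (fun hh2 => hfvd (hh2.trans hbc.2.2.1))
                  hbc.2.2.2.2.2 hvb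
          by_cases hvx : G.Adj v x
          · left
            intro h hh
            exact (htrans h hh).mpr hvx
          · right
            intro h hh hadj
            exact hvx ((htrans h hh).mp hadj)
  -- every non-D vertex has a neighbor in another class
  have hcross : ∀ x, x ∉ D → ∃ z, z ∉ D ∧ f z ≠ f x ∧ G.Adj x z := by
    intro x hx
    by_contra hno
    push_neg at hno
    set S : Set V := {z | z = f x ∨ (z ∉ D ∧ f z = f x ∧ ∀ w, w ∉ D → G.Adj z w → f w = f x)} with hS
    apply hnohom S
    have hxmem : x ∈ S := by
      right
      refine ⟨hx, rfl, ?_⟩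
      intro w hw hadj
      by_contra hfw
      exact hno w hw hfw hadj
    refine ⟨?_, ?_, ?_⟩
    · have hsub : ({x, f x} : Set V) ⊆ S := by
        rintro z (rfl | rfl)
        · exact hxmem
        · exact Or.inl rfl
      have := Set.ncard_le_ncard hsub (Set.toFinite _)
      rwa [Set.ncard_pair (fun hh : x = f x => hx (hh ▸ hfD x))] at this
    · intro he
      obtain ⟨e, heD, hne, -⟩ := hthird (f x) (f x)
      have : e ∈ S := (Set.ext_iff.mp he e).mpr trivial
      rcases this with h | h
      · exact hne h
      · exact h.1 heD
    · intro v hv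
      by_cases hvD : v ∈ D
      · have hvd : v ≠ f x := fun hh => hv (Or.inl hh)
        right
        rintro h (rfl | hh) hadj
        · exact hDD v hvD (f x) (hfD x) hadj
        · exact hnadj h hh.1 v hvD (fun h2 => hvd (h2.trans hh.2.1)) hadj
      · by_cases hfvd : f v = f x
        · left
          rintro h (rfl | hh)
          · exact hfvd ▸ (hfadj v hvD).symm
          · refine hclique v h hvD hh.1 (hfvd.trans hh.2.1.symm) ?_
            rintro rfl
            exact hv (Or.inr hh)
        · right
          rintro h (rfl | hh) hadj
          · exact hfvd ((hadjf v (f x) (hfD x) hadj.symm).symm)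
          · exact hfvd (hh.2.2 v hvD hadj.symm)
  -- Lemma 7 : a distinguisher pins down the class of cross neighbors
  have hL7 : ∀ u1 u2 t z, u1 ∉ D → u2 ∉ D → t ∉ D → z ∉ D →
      f u1 = f u2 → u1 ≠ u2 → f t ≠ f u1 → G.Adj t u1 → ¬ G.Adj t u2 →
      G.Adj u2 z → f z ≠ f u1 → f z = f t := by
    intro u1 u2 t z hu1 hu2 ht hz hf12 hne hft ht1 hnt2 hz2 hfz1
    by_contra hzt
    have hu12 : G.Adj u1 u2 := hclique u1 u2 hu1 hu2 hf12 hne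
    have hft2 : f t ≠ f u2 := hf12 ▸ hft
    have hfz2 : f z ≠ f u2 := hf12 ▸ hfz1
    by_cases hz1 : G.Adj z u1
    · have htz : G.Adj t z := hT t u1 z ht hu1 hz hft
        (fun hh => hfz1 hh.symm) (fun hh => hzt hh.symm) ht1 hz1.symm
      exact hnt2 (hT t z u2 ht hz hu2 (fun hh => hzt hh.symm) hfz2 hft2 htz hz2.symm)
    · by_cases hzt2 : G.Adj z t
      · exact hz1 (hT z t u1 hz ht hu1 hzt hft hfz1 hzt2 ht1)
      · exact no_P5_aux hP5 hz2.symm hu12.symm ht1.symm (hfadj t ht).symm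
          hz1 hzt2
          (fun h => hzt (hadjf z (f t) (hfD t) h.symm).symm)
          (fun h => hnt2 h.symm)
          (fun h => hft2 (hadjf u2 (f t) (hfD t) h.symm))
          (fun h => hft (hadjf u1 (f t) (hfD t) h.symm))
  -- transport predicates along walks
  have hwalkP : ∀ (P : V → Prop), (∀ a b, P a → G.Adj a b → P b) →
      ∀ {x y : V}, G.Walk x y → P x → P y := by
    intro P hstep x y w
    induction w with
    | nil => exact id
    | cons h w' ih => exact fun hx => ih (hstep _ _ hx h)
  -- bridges between any two classes
  have hbridge : ∀ d e, d ∈ D → e ∈ D → d ≠ e →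
      ∃ p q, p ∉ D ∧ q ∉ D ∧ f p = d ∧ f q = e ∧ G.Adj p q := by
    intro d e hd he hdne
    set Br : V → Prop :=
      fun e' => ∃ p q, p ∉ D ∧ q ∉ D ∧ f p = d ∧ f q = e' ∧ G.Adj p q with hBr
    set P : V → Prop := fun y => y = d ∨ (y ∉ D ∧ f y = d) ∨
      (y ∉ D ∧ f y ≠ d ∧ Br (f y)) ∨ (y ∈ D ∧ y ≠ d ∧ Br y) with hP
    have hstep : ∀ a b, P a → G.Adj a b → P b := by
      intro a b hPa hab
      rcases hPa with rfl | ⟨haD, hfa⟩ | ⟨haD, hfa, hbra⟩ | ⟨haD, hane, hbra⟩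
      · -- a = d
        have hbD : b ∉ D := fun hbD => hDD a hd b hbD hab
        exact Or.inr (Or.inl ⟨hbD, (hadjf b a hd hab).symm⟩)
      · by_cases hbD : b ∈ D
        · have : b = f a := hadjf a b hbD hab.symm
          rw [this, hfa]
          exact Or.inl rfl
        · by_cases hfb : f b = d
          · exact Or.inr (Or.inl ⟨hbD, hfb⟩)
          · exact Or.inr (Or.inr (Or.inl ⟨hbD, hfb, a, b, haD, hbD, hfa, rfl, hab⟩))
      · obtain ⟨p, q, hp, hq, hfp, hfq, hpq⟩ := hbra
        by_cases hbD : b ∈ D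
        · have hbfa : b = f a := hadjf a b hbD hab.symm
          refine Or.inr (Or.inr (Or.inr ⟨hbD, ?_, ?_⟩))
          · rw [hbfa]; exact hfa
          · rw [hbfa]; exact ⟨p, q, hp, hq, hfp, hfq, hpq⟩
        · by_cases hfb : f b = d
          · exact Or.inr (Or.inl ⟨hbD, hfb⟩)
          · by_cases hfb2 : f b = f a
            · exact Or.inr (Or.inr (Or.inl ⟨hbD, hfb2 ▸ hfa,
                hfb2 ▸ (⟨p, q, hp, hq, hfp, hfq, hpq⟩ : Br (f a))⟩))
            · -- genuinely new class : find a bridge to it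
              refine Or.inr (Or.inr (Or.inl ⟨hbD, hfb, ?_⟩))
              by_cases h1 : G.Adj p a
              · exact ⟨p, b, hp, hbD, hfp, rfl,
                  hT p a b hp haD hbD (hfp ▸ fun hh => hfa hh.symm)
                    (fun hh => hfb2 hh.symm) (hfp ▸ fun hh => hfb hh.symm) h1 hab⟩
              · by_cases h2 : G.Adj p b
                · exact ⟨p, b, hp, hbD, hfp, rfl, h2⟩
                · by_cases h3 : G.Adj q b
                  · exact ⟨p, b, hp, hbD, hfp, rfl,
                      hT p q b hp hq hbD (hfp ▸ hfq ▸ fun hh => hfa hh.symm)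
                        (hfq ▸ fun hh => hfb2 hh.symm) (hfp ▸ fun hh => hfb hh.symm) hpq h3⟩
                  · have hqa : q ≠ a := by
                      rintro rfl
                      exact h1 hpq
                    have hq_a : G.Adj q a := hclique q a hq haD hfq hqa
                    exact (no_P5_aux hP5 (hfp ▸ hfadj p hp) hpq hq_a hab
                      (hnadj q hq d hd (fun hh => hfa (hh.trans hfq).symm))
                      (hnadj a haD d hd (fun hh => hfa hh.symm))
                      (hnadj b hbD d hd (fun hh => hfb hh.symm))
                      h1 h2 h3).elim
      · -- a ∈ D, a ≠ d
        have hbD : b ∉ D := fun hbD => hDD a haD b hbD hab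
        have hfb : a = f b := hadjf b a haD hab
        refine Or.inr (Or.inr (Or.inl ⟨hbD, ?_, ?_⟩))
        · rw [← hfb]; exact hane
        · rw [← hfb]; exact hbra
    have hPe : P e := (hconn d e).elim fun w => hwalkP P hstep w (Or.inl rfl)
    rcases hPe with rfl | ⟨heD, -⟩ | ⟨heD, -, -⟩ | ⟨-, -, hbre⟩
    · exact absurd rfl hdne
    · exact absurd he heD
    · exact absurd he heD
    · exact hbre
  -- all-or-none adjacency towards a class
  have hAON : ∀ u1 u2 w, u1 ∉ D → u2 ∉ D → w ∉ D → f u1 = f u2 → u1 ≠ u2 → f w ≠ f u1 →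
      G.Adj w u1 → G.Adj w u2 := by
    intro u1 u2 w hu1 hu2 hw hf12 hne hfw hw1
    by_contra hw2
    have hu12 : G.Adj u1 u2 := hclique u1 u2 hu1 hu2 hf12 hne
    obtain ⟨z, hz, hfz, hz2⟩ := hcross u2 hu2
    have hfz1 : f z ≠ f u1 := hf12 ▸ hfz
    have hfzw : f z = f w := hL7 u1 u2 w z hu1 hu2 hw hz hf12 hne hfw hw1 hw2 hz2 hfz1
    obtain ⟨d3, hd3D, hd3a, hd3b⟩ := hthird (f u1) (f w)
    obtain ⟨p, q, hp, hq, hfp, hfq, hpq⟩ := hbridge (f u1) d3 (hfD u1) hd3D (fun h => hd3a h.symm)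
    have hfq1 : f q ≠ f u1 := fun h => hd3a (hfq ▸ h)
    have hfq2 : f q ≠ f u2 := hf12 ▸ hfq1
    have hfqw : f q ≠ f w := fun h => hd3b (hfq ▸ h)
    have hfw2 : f w ≠ f u2 := hf12 ▸ hfw
    have hq1 : ¬ G.Adj q u1 := by
      intro hq1
      by_cases hq2 : G.Adj q u2
      · have hwq : G.Adj w q := hT w u1 q hw hu1 hq hfw (fun h => hfq1 h.symm)
          (fun h => hfqw h.symm) hw1 hq1.symm
        exact hw2 (hT w q u2 hw hq hu2 (fun h => hfqw h.symm) hfq2 hfw2 hwq hq2)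
      · have := hL7 u1 u2 q z hu1 hu2 hq hz hf12 hne hfq1 hq1 hq2 hz2 hfz1
        exact hfqw (this ▸ hfzw)
    have hq2 : ¬ G.Adj q u2 := by
      intro hq2
      have := hL7 u2 u1 q w hu2 hu1 hq hw hf12.symm (Ne.symm hne) hfq2 hq2 hq1 hw1.symm hfw2
      exact hfqw this.symm
    have hpu1 : p ≠ u1 := by rintro rfl; exact hq1 hpq.symm
    have hpu2 : p ≠ u2 := by rintro rfl; exact hq2 hpq.symm
    have hp1 : G.Adj p u1 := hclique p u1 hp hu1 hfp hpu1
    have hp2 : G.Adj p u2 := hclique p u2 hp hu2 (hfp.trans hf12) hpu2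
    have hqw : ¬ G.Adj q w := fun h =>
      hq1 (hT q w u1 hq hw hu1 hfqw hfw hfq1 h hw1)
    have hqz : ¬ G.Adj q z := fun h =>
      hq2 (hT q z u2 hq hz hu2 (fun hh => hfqw (hh.trans hfzw)) (hf12 ▸ hfz) hfq2 h hz2.symm)
    by_cases hpw : G.Adj p w
    · by_cases hpz : G.Adj p z
      · exact hqz (hT q p z hq hp hz (fun hh => hfq1 (hh.trans hfp))
          (fun hh => hfz1 ((hfp ▸ hh).symm)) (fun hh => hfqw (hh.trans hfzw)) hpq.symm hpz)
      · -- P5 (q, p, u2, z, f z)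
        exact no_P5_aux hP5 hpq.symm hp2 hz2 (hfadj z hz).symm
          hq2 hqz
          (fun h => (hnadj q hq (f z) (hfD z) (fun hh => hfqw (hh.symm.trans hfzw))) h.symm)
          hpz
          (fun h => (hnadj p hp (f z) (hfD z) (fun hh => hfz1 (hh.trans hfp))) h.symm)
          (fun h => (hnadj u2 hu2 (f z) (hfD z) hfz) h.symm)
    · -- P5 (q, p, u1, w, f w)
      exact no_P5_aux hP5 hpq.symm hp1 hw1.symm (hfadj w hw).symm
        hq1 hqw
        (fun h => (hnadj q hq (f w) (hfD w) (Ne.symm hfqw)) h.symm)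
        hpw
        (fun h => (hnadj p hp (f w) (hfD w) (fun hh => hfw (hh.trans hfp))) h.symm)
        (fun h => (hnadj u1 hu1 (f w) (hfD w) hfw) h.symm)
  -- classes are singletons
  have hsingle : ∀ x y, x ∉ D → y ∉ D → f x = f y → x = y := by
    intro x y hx hy hfxy
    by_contra hne
    set S : Set V := {z | z ∉ D ∧ f z = f x} with hS
    apply hnohom S
    refine ⟨?_, ?_, ?_⟩
    · have hsub : ({x, y} : Set V) ⊆ S := by
        rintro z (rfl | rfl)
        · exact ⟨hx, rfl⟩
        · exact ⟨hy, hfxy.symm⟩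
      have := Set.ncard_le_ncard hsub (Set.toFinite _)
      rwa [Set.ncard_pair hne] at this
    · intro he
      have : f x ∈ S := (Set.ext_iff.mp he (f x)).mpr trivial
      exact this.1 (hfD x)
    · intro v hv
      by_cases hvD : v ∈ D
      · by_cases hvd : v = f x
        · left
          rintro h ⟨hhD, hhf⟩
          rw [hvd, ← hhf]
          exact hfadj h hhD
        · right
          rintro h ⟨hhD, hhf⟩ hadj
          exact hvd ((hadjf h v hvD hadj).trans hhf)
      · have hfv : f v ≠ f x := fun hh => hv ⟨hvD, hh⟩
        by_cases hex : ∃ h0, (h0 ∉ D ∧ f h0 = f x) ∧ G.Adj v h0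
        · left
          rintro h ⟨hhD, hhf⟩
          obtain ⟨h0, ⟨hh0D, hh0f⟩, hvh0⟩ := hex
          by_cases heq : h0 = h
          · exact heq ▸ hvh0
          · exact hAON h0 h v hh0D hhD hvD (hh0f.trans hhf.symm) heq
              (fun hh => hfv (hh.trans hh0f)) hvh0
        · right
          rintro h hh hadj
          exact hex ⟨h, hh, hadj⟩
  -- assembly
  refine ⟨Dᶜ, D, disjoint_compl_left, Set.compl_union_self D, ?_, ?_, ?_, ?_⟩
  · intro x hx y hy hne
    have hfxy : f x ≠ f y := fun h => hne (hsingle x y hx hy h)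
    obtain ⟨p, q, hp, hq, hfp, hfq, hpq⟩ := hbridge (f x) (f y) (hfD x) (hfD y) hfxy
    have h1 : p = x := hsingle p x hp hx hfp
    have h2 : q = y := hsingle q y hq hy hfq
    exact h1 ▸ h2 ▸ hpq
  · exact fun a ha b hb _ => hDD a ha b hb
  · intro c hc
    refine ⟨f c, ⟨hfD c, (hfadj c hc).symm⟩, ?_⟩
    rintro y ⟨hyD, hyc⟩
    exact hadjf c y hyD hyc.symm
  · intro i hi
    have h1lt : 1 < Fintype.card V := by omega
    obtain ⟨v, hvne⟩ := Fintype.exists_ne_of_one_lt_card h1lt i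
    obtain ⟨x, hx⟩ : ∃ x, G.Adj i x := by
      obtain ⟨w⟩ := hconn i v
      cases w with
      | nil => exact absurd rfl hvne
      | cons h _ => exact ⟨_, h⟩
    have hxD : x ∉ D := fun hxD => hDD i hi x hxD hx
    refine ⟨x, ⟨hxD, hx⟩, ?_⟩
    rintro y ⟨hyD, hyadj⟩
    exact hsingle y x hyD hxD ((hadjf y i hi hyadj).symm.trans (hadjf x i hi hx))

theorem stmt_18 {V : Type*} [Fintype V] (G : SimpleGraph V) (hprime : G.IsPrime)
    (hP5 : G.P5Free) (D : Set V) (hD : G.IsEDS D) (hcard : 3 ≤ D.ncard) :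
    G.IsThinSpider ∧ G.TwoP2Free := by
  have hsp := stmt_18' G hprime hP5 D hD hcard
  exact ⟨hsp, thinSpider_twoP2Free hsp⟩
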